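/- In the cyclic tournament on n = 2k+1 players where each player beats the next k players cyclically, all players have exactly k wins, and for every player i, if player i−1 throws their match to i then player i becomes the unique player with k+1 wins (a strict Copeland winner). -/

import Mathlib

abbrev Tournament (n : ℕ) := Fin n → Fin n → Bool

def IsTournament {n : ℕ} (T : Tournament n) : Prop :=
  (∀ i, T i i = false) ∧ ∀ i j : Fin n, i ≠ j → T i j = !T j i

def CondorcetWinner {n : ℕ} (T : Tournament n) (i : Fin n) : Prop :=
  ∀ j, j ≠ i → T i j = true

def PairAdjacent {n : ℕ} (i j : Fin n) (T T' : Tournament n) : Prop :=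
  ∀ a b : Fin n, ¬((a = i ∧ b = j) ∨ (a = j ∧ b = i)) → T a b = T' a b

def SAdjacent {n : ℕ} (S : Finset (Fin n)) (T T' : Tournament n) : Prop :=
  ∀ a b : Fin n, (a ∉ S ∨ b ∉ S) → T a b = T' a b

def IsRule {n : ℕ} (r : Tournament n → Fin n → ℝ) : Prop :=
  ∀ T, IsTournament T → (∀ i, 0 ≤ r T i) ∧ (∑ i, r T i) = 1

def CondorcetConsistent {n : ℕ} (r : Tournament n → Fin n → ℝ) : Prop :=
  ∀ T, IsTournament T → ∀ i, CondorcetWinner T i → r T i = 1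

def SNM2 {n : ℕ} (r : Tournament n → Fin n → ℝ) (α : ℝ) : Prop :=
  ∀ T T' : Tournament n, IsTournament T → IsTournament T' →
    ∀ i j : Fin n, i ≠ j → PairAdjacent i j T T' →
      r T' i + r T' j - r T i - r T j ≤ α

def SNMk {n : ℕ} (k : ℕ) (r : Tournament n → Fin n → ℝ) (α : ℝ) : Prop :=
  ∀ S : Finset (Fin n), S.card ≤ k → ∀ T T' : Tournament n,
    IsTournament T → IsTournament T' → SAdjacent S T T' →
      (∑ i ∈ S, r T' i) - (∑ i ∈ S, r T i) ≤ α

def flipTo {n : ℕ} (i j : Fin n) (T : Tournament n) : Tournament n :=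
  fun a b => if a = i ∧ b = j then true else if a = j ∧ b = i then false else T a b

def winCount {n : ℕ} (T : Tournament n) (i : Fin n) : ℕ :=
  (Finset.univ.filter fun j => T i j = true).card

def cyclicT (m w : ℕ) : Tournament m :=
  fun i j => decide (1 ≤ (j.val + m - i.val) % m ∧ (j.val + m - i.val) % m ≤ w)

def skT (n : ℕ) : Tournament n :=
  fun i j =>
    if i.val = n - 1 ∧ j.val = 0 then true
    else if i.val = 0 ∧ j.val = n - 1 then false
    else decide (i.val < j.val)


lemma aux_sub_val (k : ℕ) (i j : Fin (2*k+1)) :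
    (j.val + (2*k+1) - i.val) % (2*k+1) = ((j - i)).val := by
  have := i.isLt
  simp [Fin.sub_def]; congr 1; omega

lemma aux_cyc_iff (k : ℕ) (i j : Fin (2*k+1)) :
    cyclicT (2*k+1) k i j = true ↔ 1 ≤ (j - i).val ∧ (j - i).val ≤ k := by
  simp [cyclicT, aux_sub_val]

lemma aux_one_val (k : ℕ) (hk : 1 ≤ k) : ((1 : Fin (2*k+1))).val = 1 := by
  simp [Fin.val_one']; omega

lemma aux_neg_one_val (k : ℕ) (hk : 1 ≤ k) : ((-1 : Fin (2*k+1))).val = 2*k := by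
  have h1 : (1:ℕ) % (2*k+1) = 1 := Nat.mod_eq_of_lt (by omega)
  have h0 : (-1 : Fin (2*k+1)) = 0 - 1 := by abel
  rw [h0, Fin.sub_def]
  simp [Fin.val_one', h1]

lemma aux_card (k : ℕ) :
    (Finset.univ.filter fun x : Fin (2*k+1) => 1 ≤ x.val ∧ x.val ≤ k).card = k := by
  have h : (Finset.univ.filter fun x : Fin (2*k+1) => 1 ≤ x.val ∧ x.val ≤ k).map Fin.valEmbedding
      = Finset.Ico 1 (k+1) := by
    ext a
    simp only [Finset.mem_map, Finset.mem_filter, Finset.mem_univ, true_and,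
      Fin.valEmbedding_apply, Finset.mem_Ico]
    constructor
    · rintro ⟨x, hx, rfl⟩; omega
    · intro ha; exact ⟨⟨a, by omega⟩, by simp; omega, rfl⟩
  have := congrArg Finset.card h
  simpa using this

lemma aux_wc (k : ℕ) (i : Fin (2*k+1)) : winCount (cyclicT (2*k+1) k) i = k := by
  unfold winCount
  have hb : (Finset.univ.filter fun j => cyclicT (2*k+1) k i j = true).card
      = (Finset.univ.filter fun x : Fin (2*k+1) => 1 ≤ x.val ∧ x.val ≤ k).card := by
    apply Finset.card_bij' (fun j _ => j - i) (fun x _ => x + i)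
    · intro a ha
      simp only [Finset.mem_filter, Finset.mem_univ, true_and] at ha ⊢
      exact (aux_cyc_iff k i a).mp ha
    · intro a ha
      simp only [Finset.mem_filter, Finset.mem_univ, true_and] at ha ⊢
      rw [aux_cyc_iff]
      simpa using ha
    · intro a _; abel
    · intro a _; abel
  rw [hb, aux_card]

lemma aux_ne (k : ℕ) (hk : 1 ≤ k) (i : Fin (2*k+1)) : i - 1 ≠ i := by
  intro h
  have h2 : (1 : Fin (2*k+1)) = 0 := sub_eq_self.mp h
  have := congrArg Fin.val h2
  rw [aux_one_val k hk] at this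
  simp at this

lemma aux_loss (k : ℕ) (hk : 1 ≤ k) (i : Fin (2*k+1)) :
    cyclicT (2*k+1) k i (i-1) = false := by
  rw [Bool.eq_false_iff, Ne, Bool.eq_iff_iff, aux_cyc_iff]
  have h : (i - 1) - i = -1 := by abel
  rw [h, aux_neg_one_val k hk]
  simp; omega

lemma aux_win (k : ℕ) (hk : 1 ≤ k) (i : Fin (2*k+1)) :
    cyclicT (2*k+1) k (i-1) i = true := by
  rw [aux_cyc_iff]
  have h : i - (i - 1) = 1 := by abel
  rw [h, aux_one_val k hk]
  omega

/-- In the cyclic tournament on 2k+1 players all players have exactly k wins, and if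
player i-1 throws their match to i, player i becomes the unique player with k+1 wins. -/
theorem stmt_4 (k : ℕ) (hk : 1 ≤ k) :
    (∀ i : Fin (2*k + 1), winCount (cyclicT (2*k + 1) k) i = k) ∧
    (∀ i : Fin (2*k + 1),
      winCount (flipTo i (i - 1) (cyclicT (2*k + 1) k)) i = k + 1 ∧
      ∀ j : Fin (2*k + 1), j ≠ i →
        winCount (flipTo i (i - 1) (cyclicT (2*k + 1) k)) j < k + 1) := by
  have hwc := aux_wc k
  refine ⟨hwc, fun i => ?_⟩
  have hne : i - 1 ≠ i := aux_ne k hk i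
  have hne' : i ≠ i - 1 := fun h => hne h.symm
  constructor
  · -- winner count of i
    have hrow : ∀ b, flipTo i (i-1) (cyclicT (2*k+1) k) i b
        = if b = i - 1 then true else cyclicT (2*k+1) k i b := by
      intro b
      simp [flipTo, hne']
    have hset : (Finset.univ.filter fun b => flipTo i (i-1) (cyclicT (2*k+1) k) i b = true)
        = insert (i-1) (Finset.univ.filter fun b => cyclicT (2*k+1) k i b = true) := by
      ext b
      by_cases hb : b = i - 1 <;>
        simp [hrow, hb, Finset.mem_insert]
    have hnotmem : (i-1) ∉ (Finset.univ.filter fun b => cyclicT (2*k+1) k i b = true) := by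
      simp [aux_loss k hk i]
    unfold winCount
    rw [hset, Finset.card_insert_of_notMem hnotmem]
    have := hwc i
    unfold winCount at this
    omega
  · intro j hj
    by_cases hj1 : j = i - 1
    · subst hj1
      have hrow : ∀ b, flipTo i (i-1) (cyclicT (2*k+1) k) (i-1) b
          = if b = i then false else cyclicT (2*k+1) k (i-1) b := by
        intro b
        by_cases hb : b = i <;> simp [flipTo, hne, hb, hne']
      have hset : (Finset.univ.filter fun b => flipTo i (i-1) (cyclicT (2*k+1) k) (i-1) b = true)
          = (Finset.univ.filter fun b => cyclicT (2*k+1) k (i-1) b = true).erase i := by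
        ext b
        by_cases hb : b = i <;>
          simp [hrow, hb, Finset.mem_erase]
      unfold winCount
      rw [hset]
      have hle := Finset.card_erase_le (s := Finset.univ.filter fun b => cyclicT (2*k+1) k (i-1) b = true) (a := i)
      have := hwc (i-1)
      unfold winCount at this
      omega
    · have hrow : ∀ b, flipTo i (i-1) (cyclicT (2*k+1) k) j b
          = cyclicT (2*k+1) k j b := by
        intro b
        simp [flipTo, hj, hj1]
      have hset : (Finset.univ.filter fun b => flipTo i (i-1) (cyclicT (2*k+1) k) j b = true)
          = (Finset.univ.filter fun b => cyclicT (2*k+1) k j b = true) := by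
        ext b; simp [hrow]
      unfold winCount
      rw [hset]
      have := hwc j
      unfold winCount at this
      omega
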